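/- Let μ be a Markov kernel on X and S ⊆ X. Define the truncated robust value iteration V̲_T(x) = 1_S(x) and V̲_l(x) = 1_S(x)·[E_μ[V̲_{l+1}(X_+)|X=x] − c]₀¹, where [z]₀¹ := min(max(z,0),1) and c ≥ 0 is a fixed penalty. Then V̲_l(x) ≤ V_l(x) for all l and x, where V is the exact value iteration V_T = 1_S, V_l(x) = 1_S(x)·E_μ[V_{l+1}(X_+)|X=x]; hence V̲_0(x₀) is a lower bound on the T-step safety probability. -/
import Mathlib


open MeasureTheory ENNReal

/-- The truncated robust value iteration with penalty `c ≥ 0`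
lower-bounds the exact value iteration at every step; hence `V̲ 0 x₀` is a
lower bound on the `T`-step safety probability `V 0 x₀`. -/
theorem stmt_10 {X : Type*} [MeasurableSpace X] (κ : ProbabilityTheory.Kernel X X)
    [ProbabilityTheory.IsMarkovKernel κ] (S : Set X) (hS : MeasurableSet S)
    (T : ℕ) (c : ℝ≥0∞)
    (V Vlow : ℕ → X → ℝ≥0∞)
    (hVT : ∀ x, V T x = S.indicator 1 x)
    (hVl : ∀ l < T, ∀ x, V l x =
      S.indicator (fun x' => ∫⁻ y, V (l + 1) y ∂(κ x')) x)
    (hVlowT : ∀ x, Vlow T x = S.indicator 1 x)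
    (hVlowl : ∀ l < T, ∀ x, Vlow l x =
      S.indicator (fun x' => min 1 ((∫⁻ y, Vlow (l + 1) y ∂(κ x')) - c)) x) :
    ∀ l ≤ T, ∀ x, Vlow l x ≤ V l x := by
  suffices h : ∀ n, ∀ l, l + n = T → ∀ x, Vlow l x ≤ V l x by
    intro l hl x; exact h (T - l) l (by omega) x
  intro n
  induction n with
  | zero =>
    intro l hl x
    have : l = T := by omega
    subst this
    rw [hVlowT, hVT]
  | succ n ih =>
    intro l hl x
    have hlT : l < T := by omega
    rw [hVlowl l hlT x, hVl l hlT x]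
    refine Set.indicator_le_indicator ?_
    calc min 1 ((∫⁻ y, Vlow (l + 1) y ∂(κ x)) - c)
        ≤ (∫⁻ y, Vlow (l + 1) y ∂(κ x)) - c := min_le_right _ _
      _ ≤ ∫⁻ y, Vlow (l + 1) y ∂(κ x) := tsub_le_self
      _ ≤ ∫⁻ y, V (l + 1) y ∂(κ x) := lintegral_mono fun y => ih (l + 1) (by omega) y
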